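/- arXiv:2208.14404 — 10 statements merged into one kernel-verified Lean document; each statement's English description precedes it below -/
import Mathlib

section
/- Let p be a prime, m a positive integer, n = p^m - 1, and e an integer with 1 ≤ e ≤ n-1. If 1 ≤ gcd(e, n) ≤ p-1, then the size of the p-cyclotomic coset C_e modulo n is m, i.e., the least positive integer l with e·p^l ≡ e (mod n) equals m. -/
theorem stmt_0 (p m e n : ℕ) (hp : p.Prime) (hm : 0 < m)
    (hn : n = p ^ m - 1)
    (he1 : 1 ≤ e) (he2 : e ≤ n - 1)
    (hg1 : 1 ≤ Nat.gcd e n) (hg2 : Nat.gcd e n ≤ p - 1) :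
    IsLeast {l : ℕ | 0 < l ∧ e * p ^ l ≡ e [MOD n]} m := by
  have hp2 : 2 ≤ p := hp.two_le
  have hpm1 : 1 ≤ p ^ m := Nat.one_le_pow _ _ (by omega)
  have hn2 : 2 ≤ n := by omega
  constructor
  · refine ⟨hm, ?_⟩
    have h1 : p ^ m ≡ 1 [MOD n] := by
      have hpe : p ^ m = n + 1 := by omega
      rw [hpe]
      show (n + 1) % n = 1 % n
      exact Nat.add_mod_left n 1
    calc e * p ^ m ≡ e * 1 [MOD n] := h1.mul_left e
      _ = e := by ring
  · rintro l ⟨hl, hmod⟩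
    by_contra hcon
    push_neg at hcon
    have hpl2 : 2 ≤ p ^ l := le_trans hp2 (Nat.le_self_pow (by omega) p)
    have hcan : p ^ l ≡ 1 [MOD n / Nat.gcd n e] :=
      Nat.ModEq.cancel_left_div_gcd (by omega) (by simpa [mul_one] using hmod)
    have hdvd : n / Nat.gcd n e ∣ p ^ l - 1 :=
      (Nat.modEq_iff_dvd' (by omega)).mp hcan.symm
    have hle : n / Nat.gcd n e ≤ p ^ l - 1 := Nat.le_of_dvd (by omega) hdvd
    have heq : Nat.gcd n e * (n / Nat.gcd n e) = n :=
      Nat.mul_div_cancel' (Nat.gcd_dvd_left n e)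
    have key : n ≤ (p - 1) * (p ^ l - 1) := by
      calc n = Nat.gcd n e * (n / Nat.gcd n e) := heq.symm
        _ ≤ (p - 1) * (p ^ l - 1) :=
          Nat.mul_le_mul (by rw [Nat.gcd_comm]; exact hg2) hle
    have hpow : p * p ^ l ≤ p ^ m := by
      calc p * p ^ l = p ^ (l + 1) := by ring
        _ ≤ p ^ m := Nat.pow_le_pow_right (by omega) (by omega)
    have hpl1 : (1:ℕ) ≤ p ^ l := by omega
    have hp1 : (1:ℕ) ≤ p := by omega
    zify [hp1, hpl1, hpm1] at key hn
    nlinarith [key, hpow, hp2, hpl2, hn]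
end

section
/- Let p ≥ 5 be a prime, m a positive integer with p^m ≡ 1 (mod 4), and s = (p^m - 1)/2. Suppose c_2, c_3 ∈ F_p^* satisfy 1 + c_2 + c_3 = 0, and x_1, x_2, x_3 ∈ F_{p^m}^* satisfy x_1 + c_2·x_2 + c_3·x_3 = 0, x_1^{-1} + c_2·x_2^{-1} + c_3·x_3^{-1} = 0, and x_1^s = x_2^s = x_3^s = 1. Then x_2 = x_3. -/
theorem stmt_3 (p m : ℕ) (hp : p.Prime) (hp5 : 5 ≤ p) (hm : 0 < m)
    (F : Type) [Field F] [Fintype F] [CharP F p]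
    (hcard : Fintype.card F = p ^ m) (h4 : p ^ m % 4 = 1)
    (c2 c3 : ZMod p) (hc2 : c2 ≠ 0) (hc3 : c3 ≠ 0)
    (hsum : 1 + c2 + c3 = 0)
    (x1 x2 x3 : F) (hx1 : x1 ≠ 0) (hx2 : x2 ≠ 0) (hx3 : x3 ≠ 0)
    (heq1 : x1 + (ZMod.castHom (dvd_refl p) F c2) * x2 + (ZMod.castHom (dvd_refl p) F c3) * x3 = 0)
    (heq2 : x1⁻¹ + (ZMod.castHom (dvd_refl p) F c2) * x2⁻¹ + (ZMod.castHom (dvd_refl p) F c3) * x3⁻¹ = 0)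
    (hs1 : x1 ^ ((p ^ m - 1) / 2) = 1) (hs2 : x2 ^ ((p ^ m - 1) / 2) = 1)
    (hs3 : x3 ^ ((p ^ m - 1) / 2) = 1) :
    x2 = x3 := by
  haveI := Fact.mk hp
  set f := ZMod.castHom (dvd_refl p) F with hf
  set b := f c2 with hb'
  set c := f c3 with hc'
  have hb : b ≠ 0 := by
    exact fun h => hc2 (f.injective (h.trans (map_zero f).symm))
  have hc : c ≠ 0 := by
    exact fun h => hc3 (f.injective (h.trans (map_zero f).symm))
  have hbc : (1 : F) + b + c = 0 := by
    have := congrArg f hsum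
    simpa [map_add] using this
  have h2 : x2 * x3 + b * (x1 * x3) + c * (x1 * x2) = 0 := by
    have h := heq2
    field_simp at h
    linear_combination h
  have key : b * c * (x2 - x3) ^ 2 = 0 := by
    linear_combination (b * x3 + c * x2) * heq1 - h2 + x2 * x3 * (1 - b - c) * hbc
  have : (x2 - x3) ^ 2 = 0 := by
    rcases mul_eq_zero.mp key with h | h
    · exact absurd h (mul_ne_zero hb hc)
    · exact h
  exact sub_eq_zero.mp (pow_eq_zero_iff (n := 2) (by norm_num) |>.mp this)
end

section
/- Let p ≥ 5 be a prime and m a positive integer with p^m ≡ 1 (mod 4). Let e = p^m - 2 and s = (p^m - 1)/2. There do not exist c_2, c_3 ∈ F_p^* and pairwise distinct x_1, x_2, x_3 ∈ F_{p^m}^* such that x_1 + c_2·x_2 + c_3·x_3 = 0, x_1^e + c_2·x_2^e + c_3·x_3^e = 0, and x_1^s + c_2·x_2^s + c_3·x_3^s = 0. -/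
theorem stmt_5 (p m : ℕ) (hp : p.Prime) (hp5 : 5 ≤ p) (hm : 0 < m)
    (F : Type) [Field F] [Fintype F] [CharP F p]
    (hcard : Fintype.card F = p ^ m) (h4 : p ^ m % 4 = 1) :
    ¬ ∃ (c2 c3 : ZMod p) (x1 x2 x3 : F), c2 ≠ 0 ∧ c3 ≠ 0 ∧
      x1 ≠ 0 ∧ x2 ≠ 0 ∧ x3 ≠ 0 ∧ x1 ≠ x2 ∧ x1 ≠ x3 ∧ x2 ≠ x3 ∧
      x1 + (ZMod.castHom (dvd_refl p) F c2) * x2 + (ZMod.castHom (dvd_refl p) F c3) * x3 = 0 ∧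
      x1 ^ (p ^ m - 2) + (ZMod.castHom (dvd_refl p) F c2) * x2 ^ (p ^ m - 2)
        + (ZMod.castHom (dvd_refl p) F c3) * x3 ^ (p ^ m - 2) = 0 ∧
      x1 ^ ((p ^ m - 1) / 2) + (ZMod.castHom (dvd_refl p) F c2) * x2 ^ ((p ^ m - 1) / 2)
        + (ZMod.castHom (dvd_refl p) F c3) * x3 ^ ((p ^ m - 1) / 2) = 0 := by
  rintro ⟨c2, c3, x1, x2, x3, hc2, hc3, hx1, hx2, hx3, h12, h13, h23, e1, e2, e3⟩
  haveI := Fact.mk hp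
  set A : F := (ZMod.castHom (dvd_refl p) F) c2 with hAdef
  set B : F := (ZMod.castHom (dvd_refl p) F) c3 with hBdef
  have hA : A ≠ 0 := by
    simp only [hAdef, Ne, map_eq_zero]; exact hc2
  have hB : B ≠ 0 := by
    simp only [hBdef, Ne, map_eq_zero]; exact hc3
  have hq5 : 5 ≤ p ^ m := le_trans hp5 (Nat.le_self_pow hm.ne' p)
  -- x ^ (q-1) = 1 for nonzero x
  have hc1 : x1 ^ (p ^ m - 1) = 1 := by
    have := FiniteField.pow_card_sub_one_eq_one x1 hx1; rwa [hcard] at this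
  have hc2' : x2 ^ (p ^ m - 1) = 1 := by
    have := FiniteField.pow_card_sub_one_eq_one x2 hx2; rwa [hcard] at this
  have hc3' : x3 ^ (p ^ m - 1) = 1 := by
    have := FiniteField.pow_card_sub_one_eq_one x3 hx3; rwa [hcard] at this
  -- inverses
  have hsucc : p ^ m - 2 + 1 = p ^ m - 1 := by omega
  have hinv : ∀ x : F, x ^ (p ^ m - 1) = 1 → x ^ (p ^ m - 2) = x⁻¹ := by
    intro x hx
    refine eq_inv_of_mul_eq_one_left ?_
    rw [← pow_succ, hsucc, hx]
  rw [hinv x1 hc1, hinv x2 hc2', hinv x3 hc3'] at e2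
  have e2' : x2 * x3 + A * (x1 * x3) + B * (x1 * x2) = 0 := by
    field_simp at e2
    linear_combination e2
  -- the sign equation
  set s : ℕ := (p ^ m - 1) / 2 with hsdef
  have hss : s + s = p ^ m - 1 := by omega
  obtain ⟨t, ht⟩ : ∃ t, s = 2 * t := ⟨(p ^ m - 1) / 4, by omega⟩
  have hu1 : x1 ^ s * x1 ^ s = 1 := by rw [← pow_add, hss]; exact hc1
  have hu2 : x2 ^ s * x2 ^ s = 1 := by rw [← pow_add, hss]; exact hc2'
  have hu3 : x3 ^ s * x3 ^ s = 1 := by rw [← pow_add, hss]; exact hc3'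
  set a : F := x1 ^ s * x2 ^ s with hadef
  set b : F := x1 ^ s * x3 ^ s with hbdef
  have ha : a * a = 1 := by
    rw [hadef]; linear_combination (x2 ^ s * x2 ^ s) * hu1 + hu2
  have hb : b * b = 1 := by
    rw [hbdef]; linear_combination (x3 ^ s * x3 ^ s) * hu1 + hu3
  have he3 : 1 + A * a + B * b = 0 := by
    rw [hadef, hbdef]; linear_combination x1 ^ s * e3 - hu1
  -- key algebraic consequences
  have h1 : (1 - A ^ 2 - B ^ 2) * (x2 * x3) - A * B * (x2 ^ 2 + x3 ^ 2) = 0 := by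
    linear_combination e2' - (A * x3 + B * x2) * e1
  have h3 : A ^ 2 = 1 + 2 * B * b + B ^ 2 := by
    linear_combination (A * a - 1 - B * b) * he3 - A ^ 2 * ha + B ^ 2 * hb
  have h4' : 2 * a * b * A * B = -(2 * B * b) - 2 * B ^ 2 := by
    have h2 : A * a + (1 + B * b) = 0 := by linear_combination he3
    linear_combination 2 * b * B * h2 - 2 * B ^ 2 * hb
  have h5 : 1 - A ^ 2 - B ^ 2 = 2 * a * b * A * B := by
    linear_combination -h3 - h4'
  have h6 : A * B * ((x2 - a * b * x3) ^ 2) = 0 := by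
    linear_combination -h1 + (x2 * x3) * h5 + A * B * x3 ^ 2 * b ^ 2 * ha
      + A * B * x3 ^ 2 * hb
  have h7 : x2 = a * b * x3 := by
    have := mul_eq_zero.mp h6
    rcases this with h | h
    · exact absurd h (mul_ne_zero hA hB)
    · have := pow_eq_zero_iff (n := 2) (by norm_num) |>.mp h
      linear_combination this
  have hab2 : (a * b) ^ 2 = 1 := by linear_combination b ^ 2 * ha + hb
  have habs : (a * b) ^ s = 1 := by rw [ht, pow_mul, hab2, one_pow]
  have hu23 : x2 ^ s = x3 ^ s := by rw [h7, mul_pow, habs, one_mul]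
  have hab1 : a * b = 1 := by
    rw [hadef, hbdef]
    linear_combination (x2 ^ s * x3 ^ s) * hu1 + x3 ^ s * hu23 + hu3
  exact h23 (by rw [h7, hab1, one_mul])
end

section
/- Let p ≥ 5 be a prime, m a positive integer, e = (p^m - 1)/2 + p^h + 1 for some 0 ≤ h < m, and assume h ≠ m/2 when m is even. Then e is not congruent to any power p^i modulo p^m - 1 (i.e., e ∉ C_1). -/
theorem stmt_6 (p m h : ℕ) (hp : p.Prime) (hp5 : 5 ≤ p) (hm : 0 < m)
    (hh : h < m) (hhm : Even m → 2 * h ≠ m) :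
    ∀ i < m, ¬ ((p ^ m - 1) / 2 + p ^ h + 1 ≡ p ^ i [MOD p ^ m - 1]) := by
  intro i hi he
  have hppos : 0 < p := hp.pos
  have hA1 : (1:ℕ) ≤ p ^ (m - 1) := Nat.one_le_pow _ _ hppos
  have hPi : p ^ i ≤ p ^ (m - 1) := Nat.pow_le_pow_right hppos (by omega)
  have hPh : p ^ h ≤ p ^ (m - 1) := Nat.pow_le_pow_right hppos (by omega)
  have hPi1 : (1:ℕ) ≤ p ^ i := Nat.one_le_pow _ _ hppos
  have hPh1 : (1:ℕ) ≤ p ^ h := Nat.one_le_pow _ _ hppos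
  have hP : 5 * p ^ (m - 1) ≤ p ^ m := by
    calc 5 * p ^ (m - 1) ≤ p * p ^ (m - 1) := Nat.mul_le_mul_right _ hp5
    _ = p ^ (m - 1 + 1) := (pow_succ' p (m - 1)).symm
    _ = p ^ m := by rw [Nat.sub_add_cancel hm]
  set n := p ^ m - 1 with hn
  have hn1 : n + 1 = p ^ m := Nat.succ_pred_eq_of_pos (Nat.one_le_pow _ _ hppos)
  have h1 : p ^ i % n = p ^ i := Nat.mod_eq_of_lt (by omega)
  have he' : (n / 2 + p ^ h + 1) % n = p ^ i % n := he
  have he_le : n / 2 + p ^ h + 1 ≤ n := by omega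
  by_cases heq : n / 2 + p ^ h + 1 = n
  · rw [heq, Nat.mod_self, h1] at he'
    omega
  · rw [Nat.mod_eq_of_lt (by omega), h1] at he'
    omega
end

section
/- Let p ≥ 5 be a prime, m a positive integer, and e = (p^m - 1)/2 + p^h + 1 with 0 ≤ h < m and h ≠ m/2 if m is even. Then the p-cyclotomic coset C_e modulo p^m - 1 has size m. -/
theorem stmt_7 (p m h : ℕ) (hp : p.Prime) (hp5 : 5 ≤ p) (hm : 0 < m)
    (hh : h < m) (hhm : Even m → 2 * h ≠ m) :
    IsLeast {l : ℕ | 0 < l ∧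
      ((p ^ m - 1) / 2 + p ^ h + 1) * p ^ l ≡ (p ^ m - 1) / 2 + p ^ h + 1 [MOD p ^ m - 1]} m := by
  have hp2 : 2 ≤ p := by omega
  have hodd : Odd p := hp.odd_of_ne_two (by omega)
  have hpm1 : 1 ≤ p ^ m := Nat.one_le_pow _ _ (by omega)
  have hne : 2 ∣ p ^ m - 1 := by
    obtain ⟨c, hc⟩ : Odd (p ^ m) := hodd.pow
    omega
  -- key equivalence
  have key : ∀ l : ℕ,
      (((p ^ m - 1) / 2 + p ^ h + 1) * p ^ l ≡ (p ^ m - 1) / 2 + p ^ h + 1 [MOD p ^ m - 1]) ↔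
      (p ^ m - 1) ∣ (p ^ h + 1) * (p ^ l - 1) := by
    intro l
    have hpl1 : 1 ≤ p ^ l := Nat.one_le_pow _ _ (by omega)
    have hple : 2 ∣ p ^ l - 1 := by
      obtain ⟨c, hc⟩ : Odd (p ^ l) := hodd.pow
      omega
    set e := (p ^ m - 1) / 2 + p ^ h + 1 with he
    have h1 : e ≤ e * p ^ l := Nat.le_mul_of_pos_right e (by omega)
    rw [Nat.ModEq.comm, Nat.modEq_iff_dvd' h1]
    obtain ⟨a, ha⟩ := hple
    obtain ⟨b, hb⟩ := hne
    have heb : e = b + p ^ h + 1 := by rw [he]; omega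
    have h2 : e * p ^ l - e = (p ^ m - 1) * a + (p ^ h + 1) * (p ^ l - 1) := by
      have h3 : e * p ^ l - e = e * (p ^ l - 1) := by
        rw [Nat.mul_sub, Nat.mul_one]
      rw [h3, ha, heb, hb]
      ring
    rw [h2]
    exact Nat.dvd_add_right (dvd_mul_right _ a)
  constructor
  · exact ⟨hm, (key m).mpr (dvd_mul_left _ _)⟩
  · rintro l ⟨hl0, hmod⟩
    rw [key l] at hmod
    by_contra hlm
    push_neg at hlm
    have hq1 : 1 ≤ p ^ (m - 1) := Nat.one_le_pow _ _ (by omega)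
    have hpm : 5 * p ^ (m - 1) ≤ p ^ m := by
      calc 5 * p ^ (m - 1) ≤ p * p ^ (m - 1) := Nat.mul_le_mul_right _ hp5
        _ = p ^ m := by rw [← pow_succ']; congr 1; omega
    have hpl1 : 1 ≤ p ^ l := Nat.one_le_pow _ _ (by omega)
    have hpl2 : 2 ≤ p ^ l := by
      calc 2 ≤ p := hp2
        _ = p ^ 1 := (pow_one p).symm
        _ ≤ p ^ l := Nat.pow_le_pow_right (by omega) hl0
    have hX1 : 1 ≤ p ^ h := Nat.one_le_pow _ _ (by omega)
    have h2 : p ^ l ≤ p ^ (m - 1) := Nat.pow_le_pow_right (by omega) (by omega)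
    have hXq : p ^ h ≤ p ^ (m - 1) := Nat.pow_le_pow_right (by omega) (by omega)
    rcases lt_or_ge (h + l) m with hcase | hcase
    · -- h + l < m : the product is positive and smaller than p^m - 1
      have h1 : p ^ (h + l) ≤ p ^ (m - 1) := Nat.pow_le_pow_right (by omega) (by omega)
      obtain ⟨c, hc⟩ : ∃ c, p ^ l = c + 1 := ⟨p ^ l - 1, by omega⟩
      have hc' : p ^ l - 1 = c := by omega
      have e1 : p ^ (h + l) = p ^ h * c + p ^ h := by rw [pow_add, hc]; ring
      rw [hc'] at hmod
      have e2 : (p ^ h + 1) * c = p ^ h * c + c := by ring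
      rw [e2] at hmod
      have hle := Nat.le_of_dvd (by omega) hmod
      omega
    · -- h + l ≥ m
      set k := h + l - m with hk
      have hkh : k < h := by omega
      have hdvd : ((p : ℤ) ^ m - 1) ∣ ((p : ℤ) ^ h + 1) * ((p : ℤ) ^ l - 1) := by
        have := Int.natCast_dvd_natCast.mpr hmod
        push_cast [hpm1, hpl1] at this
        convert this using 2 <;> push_cast [hpm1, hpl1] <;> ring
      have e3 : ((p : ℤ) ^ h + 1) * ((p : ℤ) ^ l - 1) =
          ((p : ℤ) ^ m - 1) * (p : ℤ) ^ k + ((p : ℤ) ^ k + (p : ℤ) ^ l - (p : ℤ) ^ h - 1) := by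
        have hpp : (p : ℤ) ^ h * (p : ℤ) ^ l = (p : ℤ) ^ m * (p : ℤ) ^ k := by
          rw [← pow_add, ← pow_add]; congr 1; omega
        linear_combination hpp
      rw [e3] at hdvd
      have hdvd2 : ((p : ℤ) ^ m - 1) ∣ ((p : ℤ) ^ k + (p : ℤ) ^ l - (p : ℤ) ^ h - 1) :=
        (dvd_add_right (dvd_mul_right _ _)).mp hdvd
      have hkq : (p : ℤ) ^ k ≤ (p : ℤ) ^ (m - 1) := by exact_mod_cast Nat.pow_le_pow_right (by omega) (by omega)
      have hlq : (p : ℤ) ^ l ≤ (p : ℤ) ^ (m - 1) := by exact_mod_cast h2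
      have hhq : (p : ℤ) ^ h ≤ (p : ℤ) ^ (m - 1) := by exact_mod_cast hXq
      have hq1' : (1 : ℤ) ≤ (p : ℤ) ^ (m - 1) := by exact_mod_cast hq1
      have hX1' : (1 : ℤ) ≤ (p : ℤ) ^ h := by exact_mod_cast hX1
      have hk1' : (1 : ℤ) ≤ (p : ℤ) ^ k := by exact_mod_cast Nat.one_le_pow k p (by omega)
      have hl1' : (1 : ℤ) ≤ (p : ℤ) ^ l := by exact_mod_cast hpl1
      have hpm' : 5 * (p : ℤ) ^ (m - 1) ≤ (p : ℤ) ^ m := by exact_mod_cast hpm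
      have hB0 : (p : ℤ) ^ k + (p : ℤ) ^ l - (p : ℤ) ^ h - 1 = 0 :=
        Int.eq_zero_of_abs_lt_dvd hdvd2 (by rw [abs_lt]; constructor <;> linarith)
      have heq : p ^ k + p ^ l = p ^ h + 1 := by
        have hcast : ((p ^ k + p ^ l : ℕ) : ℤ) = ((p ^ h + 1 : ℕ) : ℤ) := by push_cast; linarith
        exact_mod_cast hcast
      rcases Nat.eq_zero_or_pos k with hk0 | hk1
      · have hple : p ^ l = p ^ h := by
          rw [hk0] at heq; simp at heq; omega
        have hlh : l = h := Nat.pow_right_injective hp2 hple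
        exact hhm ⟨h, by omega⟩ (by omega)
      · have d1 : p ∣ p ^ k + p ^ l := dvd_add (dvd_pow_self p (by omega)) (dvd_pow_self p (by omega))
        rw [heq] at d1
        have d2 : p ∣ 1 := (Nat.dvd_add_right (dvd_pow_self p (by omega))).mp d1
        have := Nat.le_of_dvd one_pos d2
        omega
end

section
/- Let p ≥ 5 be a prime, m a positive integer with p^m ≡ 1 (mod 4), s = (p^m-1)/2, h an integer with 0 ≤ h < m, and e = s + p^h + 1. Suppose c_2, c_3 ∈ F_p^* with 1 + c_2 + c_3 = 0, and x_1, x_2, x_3 ∈ F_{p^m}^* satisfy x_1^s = x_2^s = x_3^s = 1, x_1 + c_2·x_2 + c_3·x_3 = 0, and x_1^e + c_2·x_2^e + c_3·x_3^e = 0. Then x_2 = x_3. -/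
theorem stmt_8 (p m h : ℕ) (hp : p.Prime) (hp5 : 5 ≤ p) (hm : 0 < m)
    (hh : h < m) (h4 : p ^ m % 4 = 1)
    (F : Type) [Field F] [Fintype F] [CharP F p]
    (hcard : Fintype.card F = p ^ m)
    (c2 c3 : ZMod p) (hc2 : c2 ≠ 0) (hc3 : c3 ≠ 0)
    (hsum : 1 + c2 + c3 = 0)
    (x1 x2 x3 : F) (hx1 : x1 ≠ 0) (hx2 : x2 ≠ 0) (hx3 : x3 ≠ 0)
    (hs1 : x1 ^ ((p ^ m - 1) / 2) = 1) (hs2 : x2 ^ ((p ^ m - 1) / 2) = 1)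
    (hs3 : x3 ^ ((p ^ m - 1) / 2) = 1)
    (heq1 : x1 + (ZMod.castHom (dvd_refl p) F c2) * x2 + (ZMod.castHom (dvd_refl p) F c3) * x3 = 0)
    (heq2 : x1 ^ ((p ^ m - 1) / 2 + p ^ h + 1)
      + (ZMod.castHom (dvd_refl p) F c2) * x2 ^ ((p ^ m - 1) / 2 + p ^ h + 1)
      + (ZMod.castHom (dvd_refl p) F c3) * x3 ^ ((p ^ m - 1) / 2 + p ^ h + 1) = 0) :
    x2 = x3 := by
  haveI : Fact p.Prime := ⟨hp⟩
  set f := ZMod.castHom (dvd_refl p) F with hf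
  set C2 := f c2
  set C3 := f c3
  set q := p ^ h with hq
  -- C2, C3 nonzero
  have hinj : Function.Injective f := f.injective
  have hC2 : C2 ≠ 0 := fun hz => hc2 (hinj (hz.trans (map_zero f).symm))
  have hC3 : C3 ≠ 0 := fun hz => hc3 (hinj (hz.trans (map_zero f).symm))
  have hC : (1 : F) + C2 + C3 = 0 := by
    have := congrArg f hsum
    simpa using this
  -- C2^q = C2, C3^q = C3
  have hC2q : C2 ^ q = C2 := by
    rw [← map_pow, ZMod.pow_card_pow]
  have hC3q : C3 ^ q = C3 := by
    rw [← map_pow, ZMod.pow_card_pow]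
  -- simplify heq2
  have heq3 : x1 ^ q * x1 + C2 * (x2 ^ q * x2) + C3 * (x3 ^ q * x3) = 0 := by
    rw [pow_add, pow_add, hs1, pow_add, pow_add, hs2, pow_add, pow_add, hs3,
      one_mul, one_mul, one_mul, pow_one, pow_one, pow_one] at heq2
    linear_combination heq2
  -- Frobenius of heq1
  have heqq : x1 ^ q + C2 * x2 ^ q + C3 * x3 ^ q = 0 := by
    have := congrArg (· ^ q) heq1
    simp only [zero_pow (show q ≠ 0 from pow_ne_zero h hp.ne_zero)] at this
    rw [add_pow_char_pow, add_pow_char_pow, mul_pow, mul_pow, hC2q, hC3q] at this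
    exact this
  have key : C2 * C3 * ((x2 - x3) * (x2 ^ q - x3 ^ q)) = 0 := by
    have hx1e : x1 = -(C2 * x2 + C3 * x3) := by linear_combination heq1
    have hx1q : x1 ^ q = -(C2 * x2 ^ q + C3 * x3 ^ q) := by linear_combination heqq
    rw [hx1q, hx1e] at heq3
    linear_combination -heq3 + (C2 * (x2 ^ q * x2) + C3 * (x3 ^ q * x3)) * hC
  rw [hq, ← sub_pow_char_pow] at key
  have key2 : (x2 - x3) = 0 ∨ (x2 - x3) ^ p ^ h = 0 := by
    rcases mul_eq_zero.mp key with h1 | h1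
    · exact absurd (mul_eq_zero.mp h1) (by tauto)
    · exact mul_eq_zero.mp h1
  rcases key2 with h1 | h1
  · exact sub_eq_zero.mp h1
  · exact sub_eq_zero.mp (pow_eq_zero_iff (pow_ne_zero h hp.ne_zero) |>.mp h1)
end

section
/- Let p ≥ 5 be a prime, m a positive integer, and s = (p^m - 1)/2. Then there exist c_1, c_2 ∈ F_p^* and distinct elements x, y ∈ F_p \ {0, 1} such that 1 + c_1·x + c_2·y = 0 and 1 + c_1·x^s + c_2·y^s = 0 (where x^s, y^s are computed in F_{p^m} via the embedding of F_p into F_{p^m}). -/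
theorem stmt_9 (p m : ℕ) (hp : p.Prime) (hp5 : 5 ≤ p) (hm : 0 < m)
    (F : Type) [Field F] [Fintype F] [CharP F p]
    (hcard : Fintype.card F = p ^ m) :
    ∃ c1 c2 x y : ZMod p, c1 ≠ 0 ∧ c2 ≠ 0 ∧
      x ≠ 0 ∧ x ≠ 1 ∧ y ≠ 0 ∧ y ≠ 1 ∧ x ≠ y ∧
      1 + c1 * x + c2 * y = 0 ∧
      1 + (ZMod.castHom (dvd_refl p) F c1) * (ZMod.castHom (dvd_refl p) F x) ^ ((p ^ m - 1) / 2)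
        + (ZMod.castHom (dvd_refl p) F c2) * (ZMod.castHom (dvd_refl p) F y) ^ ((p ^ m - 1) / 2) = 0 := by
  haveI : Fact p.Prime := ⟨hp⟩
  set φ := ZMod.castHom (dvd_refl p) F with hφ
  set s := (p ^ m - 1) / 2 with hs
  -- basic numeric facts in ZMod p
  have hnz : ∀ n : ℕ, 0 < n → n < p → (n : ZMod p) ≠ 0 := by
    intro n hn hnp h
    have hd : (p : ℕ) ∣ n := (ZMod.natCast_eq_zero_iff n p).mp (by exact_mod_cast h)
    have := Nat.le_of_dvd hn hd
    omega
  have h2 : (2 : ZMod p) ≠ 0 := by simpa using hnz 2 (by norm_num) (by omega)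
  have h3 : (3 : ZMod p) ≠ 0 := by simpa using hnz 3 (by norm_num) (by omega)
  have h2F : φ (2 : ZMod p) ≠ 0 := fun h => h2 (φ.injective (by simpa using h))
  -- 2 * s = p ^ m - 1
  have hps : 2 * s = p ^ m - 1 := by
    have hodd : Odd (p ^ m) := (hp.odd_of_ne_two (by omega)).pow
    obtain ⟨k, hk⟩ := hodd
    have hp1 : 1 ≤ p ^ m := Nat.one_le_pow _ _ (by omega)
    omega
  set e := φ 2 ^ s with he
  have hee : e * e = 1 := by
    rw [he, ← pow_add, ← two_mul, hps, ← hcard]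
    exact FiniteField.pow_card_sub_one_eq_one _ h2F
  -- y = 2⁻¹ and its power
  have hy0 : (2 : ZMod p)⁻¹ ≠ 0 := inv_ne_zero h2
  have hy1 : (2 : ZMod p)⁻¹ ≠ 1 := by
    intro h
    have : (2 : ZMod p) = 1 := by
      field_simp at h; simpa using h.symm
    have : (1 : ZMod p) = 0 := by linear_combination this
    exact one_ne_zero this
  have hxy : (2 : ZMod p) ≠ (2 : ZMod p)⁻¹ := by
    intro h
    have h4 : (2 : ZMod p) * 2 = 1 := by
      nth_rewrite 2 [h]; field_simp
    have : (3 : ZMod p) = 0 := by linear_combination h4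
    exact h3 this
  have hφinv : φ (2 : ZMod p)⁻¹ = (φ 2)⁻¹ := map_inv₀ φ 2
  have hys : φ (2 : ZMod p)⁻¹ ^ s = e := by
    rw [hφinv, inv_pow, ← he]
    exact inv_eq_of_mul_eq_one_left hee
  -- case on e = 1 or e = -1
  rcases mul_self_eq_one_iff.mp hee with he1 | he1
  · -- e = 1 : c1 = -3⁻¹, c2 = -2 * 3⁻¹
    refine ⟨-3⁻¹, -2 * 3⁻¹, 2, 2⁻¹, ?_, ?_, h2, ?_, hy0, hy1, hxy, ?_, ?_⟩
    · simp [inv_ne_zero h3]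
    · intro h; apply h2
      field_simp at h
      linear_combination -h
    · intro h
      have : (1 : ZMod p) = 0 := by linear_combination h
      exact one_ne_zero this
    · field_simp
      ring
    · have h12 : (-3⁻¹ : ZMod p) + -2 * 3⁻¹ = -1 := by field_simp; ring
      rw [hys, ← he, he1, mul_one, mul_one, add_assoc, ← map_add, h12]
      simp
  · -- e = -1 : c1 = -1, c2 = 2
    refine ⟨-1, 2, 2, 2⁻¹, ?_, h2, h2, ?_, hy0, hy1, hxy, ?_, ?_⟩
    · simp
    · intro h
      have : (1 : ZMod p) = 0 := by linear_combination h
      exact one_ne_zero this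
    · field_simp
      norm_num
    · rw [hys, ← he, he1]
      push_cast [map_neg, map_one, map_ofNat]
      ring
end

section
/- Let p be an odd prime with p ≡ 1 (mod 4). Then there exist c ∈ F_p^* and x ∈ F_p \ {0, c, -c} such that x^{(p-1)/2} = -c^{(p-1)/2} and (x+1)^{(p-1)/2} = -(c-1)^{(p-1)/2}. -/
theorem stmt_10 (p : ℕ) (hp : p.Prime) (hodd : Odd p) (h4 : p % 4 = 1) :
    ∃ c x : ZMod p, c ≠ 0 ∧ x ≠ 0 ∧ x ≠ c ∧ x ≠ -c ∧
      x ^ ((p - 1) / 2) = -c ^ ((p - 1) / 2) ∧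
      (x + 1) ^ ((p - 1) / 2) = -(c - 1) ^ ((p - 1) / 2) := by
  haveI : Fact p.Prime := ⟨hp⟩
  have hp5 : 5 ≤ p := by
    have := hp.two_le; omega
  have hk : (p - 1) / 2 = p / 2 := by omega
  rw [hk]
  have hchar : ringChar (ZMod p) ≠ 2 := by
    rw [ZMod.ringChar_zmod_n]; omega
  have h2 : (2 : ZMod p) ≠ 0 := by
    intro h
    have : ((2 : ℕ) : ZMod p) = 0 := by exact_mod_cast h
    have := Nat.le_of_dvd (by norm_num) ((ZMod.natCast_eq_zero_iff 2 p).1 this)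
    omega
  have h3 : (3 : ZMod p) ≠ 0 := by
    intro h
    have : ((3 : ℕ) : ZMod p) = 0 := by exact_mod_cast h
    have := Nat.le_of_dvd (by norm_num) ((ZMod.natCast_eq_zero_iff 3 p).1 this)
    omega
  have h4ne : (4 : ZMod p) ≠ 0 := by
    have e : (4 : ZMod p) = 2 * 2 := by norm_num
    rw [e]; exact mul_ne_zero h2 h2
  obtain ⟨n, hn⟩ := FiniteField.exists_nonsquare hchar
  have hn0 : n ≠ 0 := by rintro rfl; exact hn ⟨0, by ring⟩
  have hnk : n ^ (p / 2) = -1 := by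
    rcases ZMod.pow_div_two_eq_neg_one_or_one p hn0 with h | h
    · exact absurd ((ZMod.euler_criterion p hn0).2 h) hn
    · exact h
  have hm1sq : IsSquare (-1 : ZMod p) := (ZMod.exists_sq_eq_neg_one_iff).2 (by omega)
  have hn1 : n ≠ 1 := by rintro rfl; exact hn ⟨1, by ring⟩
  have hnm1 : n ≠ -1 := by rintro rfl; exact hn hm1sq
  have h4k : (4 : ZMod p) ^ (p / 2) = 1 :=
    (ZMod.euler_criterion p h4ne).1 ⟨2, by norm_num⟩
  -- 4n + 1 ≠ 0, else n = -(1/2)^2 would be a square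
  have h4n1 : (4 * n + 1 : ZMod p) ≠ 0 := by
    intro h
    obtain ⟨y, hy⟩ := hm1sq
    apply hn
    refine ⟨y * 2⁻¹, ?_⟩
    have h2i : (2 : ZMod p) * 2⁻¹ = 1 := mul_inv_cancel₀ h2
    have hne : n = -(2⁻¹ * 2⁻¹) := by
      linear_combination (2⁻¹ * 2⁻¹) * h - n * (2 * 2⁻¹ + 1) * h2i
    rw [hne]
    linear_combination (2⁻¹ * 2⁻¹) * hy
  have h3n : (3 * n : ZMod p) ≠ 0 := mul_ne_zero h3 hn0
  obtain ⟨c, hc⟩ : ∃ c : ZMod p, c = (4 * n + 1) * (3 * n)⁻¹ := ⟨_, rfl⟩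
  have hc0 : c ≠ 0 := hc ▸ mul_ne_zero h4n1 (inv_ne_zero h3n)
  refine ⟨c, n * c, hc0, mul_ne_zero hn0 hc0, ?_, ?_, ?_, ?_⟩
  · intro h
    apply hn1
    have := mul_right_cancel₀ hc0 (h.trans (one_mul c).symm)
    exact this
  · intro h
    apply hnm1
    have : n * c = -1 * c := by rw [h]; ring
    exact mul_right_cancel₀ hc0 this
  · rw [mul_pow, hnk]; ring
  · have key : n * c + 1 = 4 * n * (c - 1) := by
      have : (3 * n) * (3 * n)⁻¹ = 1 := mul_inv_cancel₀ h3n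
      have hcne : 3 * n * c = 4 * n + 1 := by
        rw [hc, mul_comm (4 * n + 1) (3 * n)⁻¹, ← mul_assoc, mul_inv_cancel₀ h3n, one_mul]
      linear_combination -hcne
    rw [key, mul_pow, mul_pow, hnk, h4k]; ring
end

section
/- Let p be an odd prime with p ≡ 3 (mod 4), p ≥ 7. Then there exist c ∈ F_p^* and x ∈ F_p \ {0, c, -c} such that x^{(p-1)/2} = -c^{(p-1)/2} and (x+1)^{(p-1)/2} = -(c-1)^{(p-1)/2}. -/
theorem stmt_11 (p : ℕ) (hp : p.Prime) (hodd : Odd p) (h4 : p % 4 = 3) (hp7 : 7 ≤ p) :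
    ∃ c x : ZMod p, c ≠ 0 ∧ x ≠ 0 ∧ x ≠ c ∧ x ≠ -c ∧
      x ^ ((p - 1) / 2) = -c ^ ((p - 1) / 2) ∧
      (x + 1) ^ ((p - 1) / 2) = -(c - 1) ^ ((p - 1) / 2) := by
  haveI : Fact p.Prime := ⟨hp⟩
  set e := (p - 1) / 2 with he
  have hnz : ∀ n : ℕ, 0 < n → n < p → ((n : ZMod p) ≠ 0) := by
    intro n hn hnp h0
    have := (ZMod.natCast_eq_zero_iff n p).mp h0
    have := Nat.le_of_dvd hn this
    omega
  have h2 : (2 : ZMod p) ≠ 0 := by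
    have := hnz 2 (by norm_num) (by omega); exact_mod_cast this
  have h4z : (4 : ZMod p) ≠ 0 := by
    have := hnz 4 (by norm_num) (by omega); exact_mod_cast this
  have h5 : (5 : ZMod p) ≠ 0 := by
    have := hnz 5 (by norm_num) (by omega); exact_mod_cast this
  have h15 : (15 : ZMod p) ≠ 0 := by
    intro h0
    have hd : p ∣ 15 := by
      have : ((15 : ℕ) : ZMod p) = 0 := by exact_mod_cast h0
      exact (ZMod.natCast_eq_zero_iff 15 p).mp this
    rcases (Nat.Prime.dvd_mul hp).mp (show p ∣ 3 * 5 by norm_num at hd ⊢; exact hd) with h | h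
    · have := Nat.le_of_dvd (by norm_num) h; omega
    · have := Nat.le_of_dvd (by norm_num) h; omega
  have h25 : (25 : ZMod p) ≠ 0 := by
    intro h0
    have hd : p ∣ 25 := by
      have : ((25 : ℕ) : ZMod p) = 0 := by exact_mod_cast h0
      exact (ZMod.natCast_eq_zero_iff 25 p).mp this
    rcases (Nat.Prime.dvd_mul hp).mp (show p ∣ 5 * 5 by norm_num at hd ⊢; exact hd) with h | h
    · have := Nat.le_of_dvd (by norm_num) h; omega
    · have := Nat.le_of_dvd (by norm_num) h; omega
  have h2e : 2 * e = p - 1 := by omega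
  have h4e : (4 : ZMod p) ^ e = 1 := by
    have : (4 : ZMod p) = 2 ^ 2 := by norm_num
    rw [this, ← pow_mul, show 2 * e = p - 1 from h2e, ZMod.pow_card_sub_one_eq_one h2]
  have heodd : Odd e := by rw [Nat.odd_iff]; omega
  have hne : ((-1 : ZMod p)) ^ e = -1 := heodd.neg_one_pow
  refine ⟨5 / 4, -5, ?_, ?_, ?_, ?_, ?_, ?_⟩
  · exact div_ne_zero h5 h4z
  · simpa using h5
  · intro h
    apply h25
    field_simp at h
    have : (25 : ZMod p) = 0 := by linear_combination (-5) * h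
    exact this
  · intro h
    apply h15
    field_simp at h
    have : (15 : ZMod p) = 0 := by linear_combination (-5) * h
    exact this
  · rw [div_pow, h4e, div_one, show (-5 : ZMod p) = -1 * 5 by ring, mul_pow, hne]
    ring
  · have hx1 : (-5 : ZMod p) + 1 = -1 * 4 := by ring
    have hc1 : (5 : ZMod p) / 4 - 1 = 1 / 4 := by field_simp; ring
    rw [hx1, hc1, mul_pow, hne, div_pow, h4e, one_pow, div_one]
    ring
end

section
/- Let p ≥ 5 be a prime, m an even positive integer, and h, k positive integers with gcd(h+k, m) = 1 and gcd(h-k, m) = 1. Let e be an integer with e·(p^k + 1) ≡ p^h + 1 (mod p^m - 1). If y ∈ F_{p^m}^* satisfies y^{p^h} + y = y^{e·p^k} + y^e, then y ∈ F_p^*. -/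
-- auxiliary: if d divides q^a - 1 and q^b - 1 (as integers) and gcd a b = 1, then d ∣ q - 1
lemma lemA (d a b q : ℕ) (hd0 : 0 < d) (h1 : (d:ℤ) ∣ (q:ℤ)^a - 1) (h2 : (d:ℤ) ∣ (q:ℤ)^b - 1)
    (hab : Nat.gcd a b = 1) : (d:ℤ) ∣ (q:ℤ) - 1 := by
  haveI : NeZero d := ⟨hd0.ne'⟩
  have hx1 : (q : ZMod d)^a = 1 := by
    have := (ZMod.intCast_zmod_eq_zero_iff_dvd _ d).mpr h1
    push_cast at this
    linear_combination this
  have hx2 : (q : ZMod d)^b = 1 := by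
    have := (ZMod.intCast_zmod_eq_zero_iff_dvd _ d).mpr h2
    push_cast at this
    linear_combination this
  have ho : orderOf (q : ZMod d) ∣ 1 := by
    rw [← hab]
    exact Nat.dvd_gcd (orderOf_dvd_of_pow_eq_one hx1) (orderOf_dvd_of_pow_eq_one hx2)
  have : (q : ZMod d) = 1 := orderOf_eq_one_iff.mp (Nat.dvd_one.mp ho)
  have : ((q - 1 : ℤ) : ZMod d) = 0 := by push_cast [this]; ring
  exact (ZMod.intCast_zmod_eq_zero_iff_dvd _ d).mp this

-- fixed points of frobenius are in the prime field
lemma lemB {p : ℕ} (hp : p.Prime) (F : Type) [Field F] [CharP F p] (y : F) (hyp : y ^ p = y) :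
    y ∈ Set.range (ZMod.castHom (dvd_refl p) F) := by
  classical
  haveI := Fact.mk hp
  set φ := ZMod.castHom (dvd_refl p) F with hφ
  have hinj : Function.Injective φ := φ.injective
  set f : Polynomial F := Polynomial.X ^ p - Polynomial.X with hf
  have hf0 : f ≠ 0 := FiniteField.X_pow_card_sub_X_ne_zero F hp.one_lt
  have hdeg : f.natDegree = p := FiniteField.X_pow_card_sub_X_natDegree_eq F hp.one_lt
  have hroots_card : f.roots.toFinset.card ≤ p :=
    le_trans (Multiset.toFinset_card_le _) ((Polynomial.card_roots' f).trans_eq hdeg)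
  have himg : (Finset.univ.image φ) ⊆ f.roots.toFinset := by
    intro x hx
    simp only [Finset.mem_image, Finset.mem_univ, true_and] at hx
    obtain ⟨z, rfl⟩ := hx
    rw [Multiset.mem_toFinset, Polynomial.mem_roots hf0]
    simp only [Polynomial.IsRoot, hf, Polynomial.eval_sub, Polynomial.eval_pow,
      Polynomial.eval_X]
    rw [← map_pow, ZMod.pow_card, sub_self]
  have hcardimg : (Finset.univ.image φ).card = p := by
    rw [Finset.card_image_of_injective _ hinj, Finset.card_univ, ZMod.card]
  have heqset : Finset.univ.image φ = f.roots.toFinset :=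
    Finset.eq_of_subset_of_card_le himg (hroots_card.trans hcardimg.ge)
  have hy' : y ∈ f.roots.toFinset := by
    rw [Multiset.mem_toFinset, Polynomial.mem_roots hf0]
    simp [Polynomial.IsRoot, hf, hyp]
  rw [← heqset] at hy'
  simp only [Finset.mem_image, Finset.mem_univ, true_and] at hy'
  obtain ⟨z, hz⟩ := hy'
  exact ⟨z, hz⟩

theorem stmt_12 (p m h k e : ℕ) (hp : p.Prime) (hp5 : 5 ≤ p) (hm : 0 < m)
    (hmeven : Even m) (hh : 0 < h) (hk : 0 < k)
    (hg1 : Nat.gcd (h + k) m = 1) (hg2 : Int.gcd ((h : ℤ) - (k : ℤ)) (m : ℤ) = 1)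
    (he : e * (p ^ k + 1) ≡ p ^ h + 1 [MOD p ^ m - 1])
    (F : Type) [Field F] [Fintype F] [CharP F p]
    (hcard : Fintype.card F = p ^ m)
    (y : F) (hy : y ≠ 0)
    (heq : y ^ (p ^ h) + y = y ^ (e * p ^ k) + y ^ e) :
    y ∈ Set.range (ZMod.castHom (dvd_refl p) F) ∧ y ≠ 0 := by
  classical
  set u : Fˣ := Units.mk0 y hy with hu
  have hval : (u : F) = y := rfl
  set d : ℕ := orderOf u with hd
  have hd0 : 0 < d := orderOf_pos u
  have hdvd : d ∣ p ^ m - 1 := by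
    have := orderOf_dvd_card (G := Fˣ) (x := u)
    rwa [Fintype.card_units, hcard] at this
  -- congruence modulo d
  have he' : e * (p ^ k + 1) ≡ p ^ h + 1 [MOD d] := he.of_dvd hdvd
  have heI : (d:ℤ) ∣ ((e:ℤ) * ((p:ℤ)^k + 1) - ((p:ℤ)^h + 1)) := by
    have H := Nat.modEq_iff_dvd.mp he'
    push_cast at H
    exact dvd_sub_comm.mp H
  -- power equality from the congruence
  have h1 : y ^ (e * (p ^ k + 1)) = y ^ (p ^ h + 1) := by
    have : u ^ (e * (p ^ k + 1)) = u ^ (p ^ h + 1) := pow_eq_pow_iff_modEq.mpr he'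
    calc y ^ (e * (p ^ k + 1)) = ((u ^ (e * (p ^ k + 1)) : Fˣ) : F) := by rw [Units.val_pow_eq_pow_val, hval]
      _ = ((u ^ (p ^ h + 1) : Fˣ) : F) := by rw [this]
      _ = y ^ (p ^ h + 1) := by rw [Units.val_pow_eq_pow_val, hval]
  have h1' : y ^ (e * p ^ k) * y ^ e = y ^ (p ^ h) * y := by
    rw [← pow_add, show e * p ^ k + e = e * (p ^ k + 1) from by ring, h1, pow_succ]
  -- factorization
  have hz : (y - y ^ e) * (y - y ^ (e * p ^ k)) = 0 := by
    linear_combination y * heq + h1'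
  -- helper: convert power equality on y to ModEq on d
  have key : ∀ a b : ℕ, y ^ a = y ^ b → a ≡ b [MOD d] := by
    intro a b hab
    apply pow_eq_pow_iff_modEq.mp
    apply Units.ext
    rw [Units.val_pow_eq_pow_val, Units.val_pow_eq_pow_val, hval]
    exact hab
  have hdvdI : (d:ℤ) ∣ (p:ℤ)^m - 1 := by
    obtain ⟨c, hc⟩ := hdvd
    refine ⟨c, ?_⟩
    have hp1 : (1:ℕ) ≤ p ^ m := Nat.one_le_pow _ _ hp.pos
    have h2 : ((p ^ m - 1 : ℕ) : ℤ) = (p:ℤ)^m - 1 := by push_cast [hp1]; ring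
    rw [← h2, hc]; push_cast; ring
  have hcop : IsCoprime (d:ℤ) (p:ℤ) := by
    rcases Nat.coprime_or_dvd_of_prime hp d with hc | hc
    · exact Nat.isCoprime_iff_coprime.mpr hc.symm
    · exfalso
      have hA : p ∣ p ^ m - 1 := hc.trans hdvd
      have hB : p ∣ p ^ m := dvd_pow_self p hm.ne'
      have hC : p ∣ 1 := by
        have := Nat.dvd_sub hB hA
        rwa [Nat.sub_sub_self (Nat.one_le_pow _ _ hp.pos)] at this
      have := Nat.le_of_dvd one_pos hC
      omega
  -- in both cases, d ∣ p - 1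
  have hdp : (d:ℤ) ∣ (p:ℤ) - 1 := by
    rcases mul_eq_zero.mp hz with h0 | h0
    · -- y = y ^ e
      have hye : y ^ e = y ^ 1 := by rw [pow_one]; exact (sub_eq_zero.mp h0).symm
      have hmod := key _ _ hye
      have hI : (d:ℤ) ∣ (e:ℤ) - 1 := by
        have H := Nat.modEq_iff_dvd.mp hmod
        push_cast at H
        exact dvd_sub_comm.mp H
      have hI2 : (d:ℤ) ∣ (p:ℤ)^h - (p:ℤ)^k := by
        have h4 := dvd_sub heI (hI.mul_right ((p:ℤ)^k + 1))
        have h3 : (e:ℤ) * ((p:ℤ)^k + 1) - ((p:ℤ)^h + 1) - ((e:ℤ) - 1) * ((p:ℤ)^k + 1)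
            = -((p:ℤ)^h - (p:ℤ)^k) := by ring
        rw [h3] at h4
        exact dvd_neg.mp h4
      rcases le_total k h with hle | hle
      · have h5 : (d:ℤ) ∣ (p:ℤ)^k * ((p:ℤ)^(h-k) - 1) := by
          rw [mul_sub, mul_one, ← pow_add, Nat.add_sub_cancel' hle]
          exact hI2
        have hda : (d:ℤ) ∣ (p:ℤ)^(h-k) - 1 :=
          (hcop.pow_right (n := k)).dvd_of_dvd_mul_left h5
        have hn : ((h:ℤ)-(k:ℤ)).natAbs = h - k := by omega
        have hg : Nat.gcd (h - k) m = 1 := by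
          rw [Int.gcd, hn, Int.natAbs_natCast] at hg2
          exact hg2
        exact lemA d (h-k) m p hd0 hda hdvdI hg
      · have h5 : (d:ℤ) ∣ (p:ℤ)^h * ((p:ℤ)^(k-h) - 1) := by
          rw [mul_sub, mul_one, ← pow_add, Nat.add_sub_cancel' hle]
          exact dvd_neg.mp (by rw [neg_sub]; exact hI2)
        have hda : (d:ℤ) ∣ (p:ℤ)^(k-h) - 1 :=
          (hcop.pow_right (n := h)).dvd_of_dvd_mul_left h5
        have hn : ((h:ℤ)-(k:ℤ)).natAbs = k - h := by omega
        have hg : Nat.gcd (k - h) m = 1 := by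
          rw [Int.gcd, hn, Int.natAbs_natCast] at hg2
          exact hg2
        exact lemA d (k-h) m p hd0 hda hdvdI hg
    · -- y = y ^ (e * p ^ k)
      have hye : y ^ (e * p ^ k) = y ^ 1 := by rw [pow_one]; exact (sub_eq_zero.mp h0).symm
      have hmod := key _ _ hye
      have hI : (d:ℤ) ∣ (e:ℤ) * (p:ℤ)^k - 1 := by
        have H := Nat.modEq_iff_dvd.mp hmod
        push_cast at H
        exact dvd_sub_comm.mp H
      have h4 := dvd_sub heI hI
      have h3 : (e:ℤ) * ((p:ℤ)^k + 1) - ((p:ℤ)^h + 1) - ((e:ℤ) * (p:ℤ)^k - 1)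
          = (e:ℤ) - (p:ℤ)^h := by ring
      rw [h3] at h4
      have hda : (d:ℤ) ∣ (p:ℤ)^(h+k) - 1 := by
        have h6 : (p:ℤ)^(h+k) - 1 = -(((e:ℤ) - (p:ℤ)^h) * (p:ℤ)^k) + ((e:ℤ)*(p:ℤ)^k - 1) := by
          rw [pow_add]; ring
        rw [h6]
        exact dvd_add ((h4.mul_right _).neg_right) hI
      exact lemA d (h+k) m p hd0 hda hdvdI hg1
  -- conclude: y is in the prime field
  have hdp' : d ∣ p - 1 := by
    refine Int.natCast_dvd_natCast.mp ?_
    rw [Nat.cast_sub hp.one_lt.le]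
    exact_mod_cast hdp
  have hyp : y ^ p = y := by
    have h6 : y ^ (p-1) = 1 := by
      have := congrArg (Units.val) (orderOf_dvd_iff_pow_eq_one.mp hdp')
      simpa [Units.val_pow_eq_pow_val, hval] using this
    calc y ^ p = y ^ (p-1+1) := by rw [Nat.sub_add_cancel hp.one_lt.le]
      _ = y ^ (p-1) * y := pow_succ _ _
      _ = y := by rw [h6, one_mul]
  exact ⟨lemB hp F y hyp, hy⟩
end
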